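/- Let L : ℝⁿ → ℝ be a non-negative convex function with L(0) = 0 and L(x) > 0 for x ≠ 0, satisfying the two-sided Δ₂-condition, and suppose p₋ = Φ_L′(1−) > 1 and write p₊ = Φ_L′(1+). Then the Legendre transform L* also satisfies the two-sided Δ₂-condition; more precisely, L*(rx) ≤ r^{q₊}·L*(x) for all r ≥ 1 and x ∈ ℝⁿ with q₊ = p₋/(p₋ − 1), and L*(rx) ≤ r^{q₋}·L*(x) for all 0 ≤ r ≤ 1 and x ∈ ℝⁿ with q₋ = p₊/(p₊ − 1). -/

import Mathlib

open Set Real Filter Topology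

/-- The conjugate (Legendre transform) `L*(y) = sup_z [⟨y, z⟩ − L(z)]`. -/
noncomputable def legendre {n : ℕ} (L : EuclideanSpace ℝ (Fin n) → ℝ)
    (y : EuclideanSpace ℝ (Fin n)) : EReal :=
  ⨆ z : EuclideanSpace ℝ (Fin n), (((inner ℝ y z : ℝ) - L z : ℝ) : EReal)

/-- The Young function associated to `L`: `Φ_L(r) = sup_{x ≠ 0} L(rx)/L(x)`. -/
noncomputable def PhiL {n : ℕ} (L : EuclideanSpace ℝ (Fin n) → ℝ) (r : ℝ) : ℝ :=
  sSup ((fun x => L (r • x) / L x) '' {x : EuclideanSpace ℝ (Fin n) | x ≠ 0})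

/-- If `g` is subadditive-iterated (`g (k*u) ≤ k * g u`), `g 0 = 0`, and `g` has
derivative `p` at `0` within `s`, and all `t/(k+1)` lie in `s ⊆ {u | u ≠ 0}`, then `g t ≤ p * t`. -/
lemma subadd_slope_bound {g : ℝ → ℝ} (h0 : g 0 = 0)
    (hk : ∀ (k : ℕ) (u : ℝ), g ((k : ℝ) * u) ≤ (k : ℝ) * g u)
    {s : Set ℝ} {p t : ℝ} (hder : HasDerivWithinAt g p s 0) (ht : t ≠ 0)
    (hts : ∀ k : ℕ, t / (k + 1) ∈ s) (h0s : (0 : ℝ) ∉ s) : g t ≤ p * t := by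
  have hslope : Tendsto (slope g 0) (𝓝[s \ {0}] 0) (𝓝 p) := by
    rw [hasDerivWithinAt_iff_tendsto_slope] at hder
    exact hder
  have hsd : s \ {0} = s := by
    ext u; simp only [mem_diff, mem_singleton_iff, and_iff_left_iff_imp]
    rintro hu rfl; exact h0s hu
  rw [hsd] at hslope
  have hu : Tendsto (fun k : ℕ => t / ((k : ℝ) + 1)) atTop (𝓝[s] 0) := by
    rw [tendsto_nhdsWithin_iff]
    constructor
    · have := tendsto_natCast_atTop_atTop (R := ℝ)
      have h1 : Tendsto (fun k : ℕ => (k : ℝ) + 1) atTop atTop :=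
        this.atTop_add tendsto_const_nhds
      simpa [div_eq_mul_inv] using h1.inv_tendsto_atTop.const_mul t
    · exact Eventually.of_forall hts
  have hmain : Tendsto (fun k : ℕ => ((k : ℝ) + 1) * g (t / ((k : ℝ) + 1))) atTop (𝓝 (p * t)) := by
    have h2 : Tendsto (fun k : ℕ => slope g 0 (t / ((k : ℝ) + 1))) atTop (𝓝 p) :=
      hslope.comp hu
    have h3 := h2.const_mul t
    have heq : ∀ k : ℕ, t * slope g 0 (t / ((k : ℝ) + 1)) =
        ((k : ℝ) + 1) * g (t / ((k : ℝ) + 1)) := by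
      intro k
      have hk1 : ((k : ℝ) + 1) ≠ 0 := by positivity
      rw [slope_def_field, h0, sub_zero, sub_zero]
      field_simp
    rw [mul_comm p t]
    exact h3.congr heq
  refine ge_of_tendsto hmain (Eventually.of_forall fun k => ?_)
  have := hk (k + 1) (t / ((k : ℝ) + 1))
  have hk1 : ((k : ℝ) + 1) ≠ 0 := by positivity
  push_cast at this
  rwa [mul_div_cancel₀ _ hk1] at this

variable {n : ℕ} {L : EuclideanSpace ℝ (Fin n) → ℝ}

lemma scale_le (hconv : ConvexOn ℝ Set.univ L) (h0 : L 0 = 0)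
    {θ : ℝ} (h1 : 0 ≤ θ) (h2 : θ ≤ 1) (x : EuclideanSpace ℝ (Fin n)) :
    L (θ • x) ≤ θ * L x := by
  have h := hconv.2 (Set.mem_univ x) (Set.mem_univ 0) h1 (sub_nonneg.mpr h2) (by ring : θ + (1 - θ) = 1)
  simpa [h0] using h

lemma L_smul_le_of_le_pow (hconv : ConvexOn ℝ Set.univ L) (hnonneg : ∀ x, 0 ≤ L x)
    (h0 : L 0 = 0)
    (hDelta2 : ∃ C : ℝ, ∀ x : EuclideanSpace ℝ (Fin n), L ((2 : ℝ) • x) ≤ C * L x)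
    {r : ℝ} (hr : 0 ≤ r) : ∃ B : ℝ, 0 ≤ B ∧ ∀ x, L (r • x) ≤ B * L x := by
  obtain ⟨C, hC⟩ := hDelta2
  set D := max C 1 with hD
  have hD1 : (1 : ℝ) ≤ D := le_max_right _ _
  have hD0 : (0 : ℝ) ≤ D := by linarith
  have hCD : ∀ x, L ((2 : ℝ) • x) ≤ D * L x := fun x =>
    (hC x).trans (mul_le_mul_of_nonneg_right (le_max_left _ _) (hnonneg x))
  have hpow : ∀ (k : ℕ) (x : EuclideanSpace ℝ (Fin n)),
      L (((2 : ℝ) ^ k) • x) ≤ D ^ k * L x := by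
    intro k
    induction k with
    | zero => intro x; simp
    | succ k ih =>
      intro x
      have h1 : ((2 : ℝ) ^ (k + 1)) • x = (2 : ℝ) • (((2 : ℝ) ^ k) • x) := by
        rw [smul_smul]; ring_nf
      rw [h1]
      calc L ((2 : ℝ) • (((2 : ℝ) ^ k) • x)) ≤ D * L (((2 : ℝ) ^ k) • x) := hCD _
        _ ≤ D * (D ^ k * L x) := mul_le_mul_of_nonneg_left (ih x) hD0
        _ = D ^ (k + 1) * L x := by ring
  obtain ⟨k, hk⟩ := pow_unbounded_of_one_lt r (one_lt_two (α := ℝ))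
  refine ⟨D ^ k, pow_nonneg hD0 k, fun x => ?_⟩
  have h2k : (0 : ℝ) < 2 ^ k := by positivity
  have hθ : r = (r / 2 ^ k) • ((2 : ℝ) ^ k) := by rw [smul_eq_mul, div_mul_cancel₀ _ h2k.ne']
  calc L (r • x) = L ((r / 2 ^ k) • (((2 : ℝ) ^ k) • x)) := by
        rw [smul_smul]; congr 1; field_simp
    _ ≤ (r / 2 ^ k) * L (((2 : ℝ) ^ k) • x) :=
        scale_le hconv h0 (by positivity) (by rw [div_le_one h2k]; exact hk.le) _
    _ ≤ 1 * L (((2 : ℝ) ^ k) • x) := by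
        apply mul_le_mul_of_nonneg_right _ (hnonneg _)
        rw [div_le_one h2k]; exact hk.le
    _ = L (((2 : ℝ) ^ k) • x) := one_mul _
    _ ≤ D ^ k * L x := hpow k x

lemma bddAbove_phi (hconv : ConvexOn ℝ Set.univ L) (hnonneg : ∀ x, 0 ≤ L x)
    (h0 : L 0 = 0) (hpos : ∀ x, x ≠ 0 → 0 < L x)
    (hDelta2 : ∃ C : ℝ, ∀ x : EuclideanSpace ℝ (Fin n), L ((2 : ℝ) • x) ≤ C * L x)
    {r : ℝ} (hr : 0 ≤ r) :
    BddAbove ((fun x => L (r • x) / L x) '' {x : EuclideanSpace ℝ (Fin n) | x ≠ 0}) := by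
  obtain ⟨B, hB0, hB⟩ := L_smul_le_of_le_pow hconv hnonneg h0 hDelta2 hr
  refine ⟨B, ?_⟩
  rintro a ⟨x, hx, rfl⟩
  exact (div_le_iff₀ (hpos x hx)).mpr (hB x)

section phi
variable (hconv : ConvexOn ℝ Set.univ L) (hnonneg : ∀ x, 0 ≤ L x)
    (h0 : L 0 = 0) (hpos : ∀ x, x ≠ 0 → 0 < L x)
    (hDelta2 : ∃ C : ℝ, ∀ x : EuclideanSpace ℝ (Fin n), L ((2 : ℝ) • x) ≤ C * L x)
    {x₀ : EuclideanSpace ℝ (Fin n)} (hx₀ : x₀ ≠ 0)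

include hconv hnonneg h0 hpos hDelta2 hx₀

lemma le_phi {r : ℝ} (hr : 0 < r) (x : EuclideanSpace ℝ (Fin n)) (hx : x ≠ 0) :
    L (r • x) / L x ≤ PhiL L r :=
  le_csSup (bddAbove_phi hconv hnonneg h0 hpos hDelta2 hr.le) ⟨x, hx, rfl⟩

lemma phi_pos {r : ℝ} (hr : 0 < r) : 0 < PhiL L r := by
  have h1 : L (r • x₀) / L x₀ ≤ PhiL L r := le_phi hconv hnonneg h0 hpos hDelta2 hx₀ hr x₀ hx₀
  have h2 : 0 < L (r • x₀) / L x₀ :=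
    div_pos (hpos _ (smul_ne_zero hr.ne' hx₀)) (hpos _ hx₀)
  linarith

lemma L_le_phi_mul {r : ℝ} (hr : 0 < r) (x : EuclideanSpace ℝ (Fin n)) :
    L (r • x) ≤ PhiL L r * L x := by
  rcases eq_or_ne x 0 with rfl | hx
  · simp [h0]
  · exact (div_le_iff₀ (hpos x hx)).mp (le_phi hconv hnonneg h0 hpos hDelta2 hx₀ hr x hx)

lemma phi_one : PhiL L 1 = 1 := by
  apply le_antisymm
  · refine csSup_le ⟨_, ⟨x₀, hx₀, rfl⟩⟩ ?_
    rintro a ⟨x, hx, rfl⟩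
    simp only [one_smul]
    rw [div_self (hpos x hx).ne']
  · have := le_phi hconv hnonneg h0 hpos hDelta2 hx₀ one_pos x₀ hx₀
    rwa [one_smul, div_self (hpos x₀ hx₀).ne'] at this

lemma phi_submul {r s : ℝ} (hr : 0 < r) (hs : 0 < s) :
    PhiL L (r * s) ≤ PhiL L r * PhiL L s := by
  refine csSup_le ⟨_, ⟨x₀, hx₀, rfl⟩⟩ ?_
  rintro a ⟨x, hx, rfl⟩
  rw [div_le_iff₀ (hpos x hx)]
  have h1 : L ((r * s) • x) = L (r • s • x) := by rw [smul_smul]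
  rw [h1]
  calc L (r • s • x) ≤ PhiL L r * L (s • x) := L_le_phi_mul hconv hnonneg h0 hpos hDelta2 hx₀ hr _
    _ ≤ PhiL L r * (PhiL L s * L x) :=
        mul_le_mul_of_nonneg_left (L_le_phi_mul hconv hnonneg h0 hpos hDelta2 hx₀ hs x)
          (phi_pos hconv hnonneg h0 hpos hDelta2 hx₀ hr).le
    _ = PhiL L r * PhiL L s * L x := by ring

end phi

section deriv
variable (hconv : ConvexOn ℝ Set.univ L) (hnonneg : ∀ x, 0 ≤ L x)
    (h0 : L 0 = 0) (hpos : ∀ x, x ≠ 0 → 0 < L x)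
    (hDelta2 : ∃ C : ℝ, ∀ x : EuclideanSpace ℝ (Fin n), L ((2 : ℝ) • x) ≤ C * L x)
    {x₀ : EuclideanSpace ℝ (Fin n)} (hx₀ : x₀ ≠ 0)

include hconv hnonneg h0 hpos hDelta2 hx₀

lemma phi_rpow_bound {pminus pplus : ℝ}
    (hpminus : HasDerivWithinAt (PhiL L) pminus (Set.Iio 1) 1)
    (hpplus : HasDerivWithinAt (PhiL L) pplus (Set.Ioi 1) 1) :
    pminus ≤ pplus ∧ (∀ s : ℝ, 0 < s → s ≤ 1 → PhiL L s ≤ s ^ pminus) ∧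
      (∀ s : ℝ, 1 ≤ s → PhiL L s ≤ s ^ pplus) := by
  set g : ℝ → ℝ := fun t => Real.log (PhiL L (Real.exp t)) with hg
  have hΦpos : ∀ r : ℝ, 0 < r → 0 < PhiL L r := fun r hr =>
    phi_pos hconv hnonneg h0 hpos hDelta2 hx₀ hr
  have hΦ1 : PhiL L 1 = 1 := phi_one hconv hnonneg h0 hpos hDelta2 hx₀
  have hg0 : g 0 = 0 := by simp [hg, Real.exp_zero, hΦ1]
  have hgsub : ∀ a b : ℝ, g (a + b) ≤ g a + g b := by
    intro a b
    have h1 : Real.exp (a + b) = Real.exp a * Real.exp b := Real.exp_add a b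
    have h2 : PhiL L (Real.exp a * Real.exp b) ≤ PhiL L (Real.exp a) * PhiL L (Real.exp b) :=
      phi_submul hconv hnonneg h0 hpos hDelta2 hx₀ (Real.exp_pos a) (Real.exp_pos b)
    calc g (a + b) = Real.log (PhiL L (Real.exp a * Real.exp b)) := by rw [hg]; simp [h1]
      _ ≤ Real.log (PhiL L (Real.exp a) * PhiL L (Real.exp b)) :=
          Real.log_le_log (hΦpos _ (by rw [← h1]; exact Real.exp_pos _)) h2
      _ = g a + g b := by
          rw [Real.log_mul (hΦpos _ (Real.exp_pos a)).ne' (hΦpos _ (Real.exp_pos b)).ne']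
  have hgk : ∀ (k : ℕ) (u : ℝ), g ((k : ℝ) * u) ≤ (k : ℝ) * g u := by
    intro k
    induction k with
    | zero => intro u; simp [hg0]
    | succ k ih =>
      intro u
      have : ((k : ℝ) + 1) * u = (k : ℝ) * u + u := by ring
      push_cast
      rw [this]
      calc g ((k : ℝ) * u + u) ≤ g ((k : ℝ) * u) + g u := hgsub _ _
        _ ≤ (k : ℝ) * g u + g u := by linarith [ih u]
        _ = ((k : ℝ) + 1) * g u := by ring
  -- derivative of g at 0 within Iio 0 and Ioi 0
  have hexp : HasDerivAt Real.exp 1 0 := by simpa using Real.hasDerivAt_exp 0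
  have hgder : ∀ (s t : Set ℝ) (p : ℝ), HasDerivWithinAt (PhiL L) p t 1 →
      MapsTo Real.exp s t → HasDerivWithinAt g p s 0 := by
    intro s t p hP hmaps
    have h1 : HasDerivWithinAt (PhiL L ∘ Real.exp) (p * 1) s 0 := by
      apply HasDerivWithinAt.comp 0 (by rwa [Real.exp_zero]) hexp.hasDerivWithinAt hmaps
    have h2 : HasDerivAt Real.log 1 (PhiL L (Real.exp 0)) := by
      rw [Real.exp_zero, hΦ1]
      simpa using Real.hasDerivAt_log one_ne_zero
    have h3 := h2.comp_hasDerivWithinAt 0 h1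
    have h4 : (1:ℝ) * (p * 1) = p := by ring
    rw [h4] at h3
    exact h3
  have hgder_lo : HasDerivWithinAt g pminus (Set.Iio 0) 0 :=
    hgder _ _ _ hpminus (fun u hu => by simpa [Set.mem_Iio] using Real.exp_lt_one_iff.mpr hu)
  have hgder_hi : HasDerivWithinAt g pplus (Set.Ioi 0) 0 :=
    hgder _ _ _ hpplus (fun u hu => by simpa [Set.mem_Ioi] using Real.one_lt_exp_iff.mpr hu)
  have hbound_lo : ∀ t : ℝ, t < 0 → g t ≤ pminus * t := by
    intro t ht
    refine subadd_slope_bound hg0 hgk hgder_lo ht.ne ?_ (by simp)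
    intro k
    have : (0:ℝ) < (k:ℝ) + 1 := by positivity
    exact div_neg_of_neg_of_pos ht this
  have hbound_hi : ∀ t : ℝ, 0 < t → g t ≤ pplus * t := by
    intro t ht
    refine subadd_slope_bound hg0 hgk hgder_hi ht.ne' ?_ (by simp)
    intro k
    have : (0:ℝ) < (k:ℝ) + 1 := by positivity
    exact div_pos ht this
  -- pminus ≤ pplus
  have hglow : ∀ u : ℝ, 0 < u → pminus * u ≤ g u := by
    intro u hu
    have h1 : g (-u) ≤ pminus * (-u) := hbound_lo (-u) (by linarith)
    have h2 : (0:ℝ) ≤ g u + g (-u) := by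
      have := hgsub u (-u)
      simp only [add_neg_cancel, hg0] at this
      linarith
    linarith
  have hple : pminus ≤ pplus := by
    have hslope : Tendsto (slope g 0) (𝓝[Set.Ioi 0 \ {0}] 0) (𝓝 pplus) :=
      hasDerivWithinAt_iff_tendsto_slope.mp hgder_hi
    have hsd : Set.Ioi (0:ℝ) \ {0} = Set.Ioi 0 := by
      ext u; simp only [Set.mem_diff, Set.mem_singleton_iff, Set.mem_Ioi,
        and_iff_left_iff_imp]
      rintro hu rfl; exact lt_irrefl 0 hu
    rw [hsd] at hslope
    refine ge_of_tendsto hslope ?_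
    filter_upwards [self_mem_nhdsWithin] with u hu
    have hu' : (0:ℝ) < u := hu
    rw [slope_def_field, hg0, sub_zero, sub_zero, le_div_iff₀ hu']
    exact hglow u hu'
  refine ⟨hple, fun s hs hs1 => ?_, fun s hs => ?_⟩
  · rcases eq_or_lt_of_le hs1 with rfl | hlt
    · rw [hΦ1, Real.one_rpow]
    · have hlog : Real.log s < 0 := Real.log_neg hs hlt
      have h1 : g (Real.log s) ≤ pminus * Real.log s := hbound_lo _ hlog
      have h2 : PhiL L s = Real.exp (g (Real.log s)) := by
        rw [hg]; simp only
        rw [Real.exp_log hs, Real.exp_log (hΦpos s hs)]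
      rw [h2, Real.rpow_def_of_pos hs]
      exact Real.exp_le_exp.mpr (by rw [mul_comm] at h1; exact h1)
  · rcases eq_or_lt_of_le hs with rfl | hlt
    · rw [hΦ1, Real.one_rpow]
    · have hs0 : (0:ℝ) < s := by linarith
      have hlog : 0 < Real.log s := Real.log_pos hlt
      have h1 : g (Real.log s) ≤ pplus * Real.log s := hbound_hi _ hlog
      have h2 : PhiL L s = Real.exp (g (Real.log s)) := by
        rw [hg]; simp only
        rw [Real.exp_log hs0, Real.exp_log (hΦpos s hs0)]
      rw [h2, Real.rpow_def_of_pos hs0]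
      exact Real.exp_le_exp.mpr (by rw [mul_comm] at h1; exact h1)
end deriv

lemma legendre_scale {r q : ℝ} (hr : 0 < r)
    (hL : ∀ z, r ^ q * L (r ^ (1 - q) • z) ≤ L z) (x : EuclideanSpace ℝ (Fin n)) :
    legendre L (r • x) ≤ ((r ^ q : ℝ) : EReal) * legendre L x := by
  have hq0 : (0:ℝ) < r ^ q := Real.rpow_pos_of_pos hr q
  refine iSup_le fun z => ?_
  set w : EuclideanSpace ℝ (Fin n) := r ^ (1 - q) • z with hw
  have hinner : (inner ℝ (r • x) z : ℝ) = r ^ q * (inner ℝ x w : ℝ) := by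
    rw [hw, real_inner_smul_left, real_inner_smul_right, ← mul_assoc,
      ← Real.rpow_add hr]
    norm_num
  have h1 : (inner ℝ (r • x) z : ℝ) - L z ≤ r ^ q * ((inner ℝ x w : ℝ) - L w) := by
    rw [mul_sub, ← hinner]
    have := hL z
    rw [← hw] at this
    linarith
  calc (((inner ℝ (r • x) z : ℝ) - L z : ℝ) : EReal)
      ≤ ((r ^ q * ((inner ℝ x w : ℝ) - L w) : ℝ) : EReal) := EReal.coe_le_coe_iff.mpr h1
    _ = ((r ^ q : ℝ) : EReal) * (((inner ℝ x w : ℝ) - L w : ℝ) : EReal) := EReal.coe_mul _ _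
    _ ≤ ((r ^ q : ℝ) : EReal) * legendre L x := by
        apply mul_le_mul_of_nonneg_left _ (by exact_mod_cast hq0.le)
        exact le_iSup (fun z => (((inner ℝ x z : ℝ) - L z : ℝ) : EReal)) w

theorem stmt11 {n : ℕ} (L : EuclideanSpace ℝ (Fin n) → ℝ)
    (hconv : ConvexOn ℝ Set.univ L) (hnonneg : ∀ x, 0 ≤ L x) (h0 : L 0 = 0)
    (hpos : ∀ x, x ≠ 0 → 0 < L x)
    (hDelta2 : ∃ C : ℝ, ∀ x : EuclideanSpace ℝ (Fin n), L ((2 : ℝ) • x) ≤ C * L x)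
    (pminus pplus : ℝ)
    (hpminus : HasDerivWithinAt (PhiL L) pminus (Set.Iio 1) 1)
    (hpplus : HasDerivWithinAt (PhiL L) pplus (Set.Ioi 1) 1)
    (hp : 1 < pminus) :
    (∀ r : ℝ, 1 ≤ r → ∀ x, legendre L (r • x) ≤
      ((r ^ (pminus / (pminus - 1)) : ℝ) : EReal) * legendre L x) ∧
    (∀ r : ℝ, 0 ≤ r → r ≤ 1 → ∀ x, legendre L (r • x) ≤
      ((r ^ (pplus / (pplus - 1)) : ℝ) : EReal) * legendre L x) ∧
    (∃ C : ℝ, ∀ x, legendre L ((2 : ℝ) • x) ≤ (C : EReal) * legendre L x) := by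
  -- the case `n = 0` is degenerate: `PhiL L` is constant `0`, contradicting `1 < pminus`
  rcases Nat.eq_zero_or_pos n with hn | hn
  · exfalso
    subst hn
    have hempty : {x : EuclideanSpace ℝ (Fin 0) | x ≠ 0} = (∅ : Set (EuclideanSpace ℝ (Fin 0))) := by
      ext x
      simp only [Set.mem_setOf_eq, Set.mem_empty_iff_false, iff_false, not_not]
      exact Subsingleton.elim _ _
    have hPhi : PhiL L = fun _ : ℝ => (0 : ℝ) := by
      funext r
      rw [PhiL, hempty, Set.image_empty, Real.sSup_empty]
    rw [hPhi] at hpminus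
    have h2 : HasDerivWithinAt (fun _ : ℝ => (0 : ℝ)) 0 (Set.Iio 1) 1 :=
      (hasDerivWithinAt_const 1 _ 0)
    have hu := uniqueDiffWithinAt_Iio (1 : ℝ)
    have e1 := hpminus.derivWithin hu
    have e2 := h2.derivWithin hu
    rw [e2] at e1
    rw [← e1] at hp
    norm_num at hp
  -- main case
  have hx₀ : (EuclideanSpace.single (⟨0, hn⟩ : Fin n) (1 : ℝ)) ≠ 0 := by
    intro h
    have : (EuclideanSpace.single (⟨0, hn⟩ : Fin n) (1 : ℝ)) (⟨0, hn⟩ : Fin n) = (0 : EuclideanSpace ℝ (Fin n)) (⟨0, hn⟩ : Fin n) := by rw [h]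
    rw [EuclideanSpace.single_apply] at this
    simp at this
  set x₀ := EuclideanSpace.single (⟨0, hn⟩ : Fin n) (1 : ℝ)
  obtain ⟨hple, hphi_lo, hphi_hi⟩ :=
    phi_rpow_bound hconv hnonneg h0 hpos hDelta2 hx₀ hpminus hpplus
  have hpp : 1 < pplus := lt_of_lt_of_le hp hple
  have hL_lo : ∀ s : ℝ, 0 < s → s ≤ 1 → ∀ x, L (s • x) ≤ s ^ pminus * L x := by
    intro s hs hs1 x
    exact (L_le_phi_mul hconv hnonneg h0 hpos hDelta2 hx₀ hs x).trans
      (mul_le_mul_of_nonneg_right (hphi_lo s hs hs1) (hnonneg x))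
  have hL_hi : ∀ s : ℝ, 1 ≤ s → ∀ x, L (s • x) ≤ s ^ pplus * L x := by
    intro s hs x
    exact (L_le_phi_mul hconv hnonneg h0 hpos hDelta2 hx₀ (by linarith) x).trans
      (mul_le_mul_of_nonneg_right (hphi_hi s hs) (hnonneg x))
  -- generic scaling estimate
  have key : ∀ (p r : ℝ), 1 < p →
      (∀ z, L (r ^ (1 - p / (p - 1)) • z) ≤ (r ^ (1 - p / (p - 1))) ^ p * L z) →
      0 < r → ∀ x, legendre L (r • x) ≤ ((r ^ (p / (p - 1)) : ℝ) : EReal) * legendre L x := by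
    intro p r hp1 hLb hr x
    set q := p / (p - 1) with hqdef
    have hp1' : (0:ℝ) < p - 1 := by linarith
    have hq : q * (p - 1) = p := div_mul_cancel₀ p hp1'.ne'
    have hqp : (1 - q) * p = -q := by linear_combination -hq
    refine legendre_scale hr ?_ x
    intro z
    have hcpow : (r ^ (1 - q)) ^ p = r ^ (-q) := by
      rw [← Real.rpow_mul hr.le, hqp]
    calc r ^ q * L (r ^ (1 - q) • z)
        ≤ r ^ q * ((r ^ (1 - q)) ^ p * L z) :=
          mul_le_mul_of_nonneg_left (hLb z) (Real.rpow_pos_of_pos hr q).le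
      _ = (r ^ q * r ^ (-q)) * L z := by rw [hcpow]; ring
      _ = L z := by rw [← Real.rpow_add hr]; simp
  have part1 : ∀ r : ℝ, 1 ≤ r → ∀ x, legendre L (r • x) ≤
      ((r ^ (pminus / (pminus - 1)) : ℝ) : EReal) * legendre L x := by
    intro r hr x
    have hr0 : (0:ℝ) < r := by linarith
    set q := pminus / (pminus - 1) with hqdef
    have hq1 : 1 < q := by
      rw [hqdef, one_lt_div (by linarith)]; linarith
    refine key pminus r hp (fun z => ?_) hr0 x
    have hc1 : r ^ (1 - q) ≤ 1 :=
      Real.rpow_le_one_of_one_le_of_nonpos hr (by linarith)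
    have hc0 : 0 < r ^ (1 - q) := Real.rpow_pos_of_pos hr0 _
    exact hL_lo _ hc0 hc1 z
  refine ⟨part1, ?_, ⟨(2:ℝ) ^ (pminus / (pminus - 1)), fun x => part1 2 one_le_two x⟩⟩
  intro r hr0 hr1 x
  rcases eq_or_lt_of_le hr0 with rfl | hr
  · -- r = 0
    have hq0 : (0:ℝ) ^ (pplus / (pplus - 1)) = 0 :=
      Real.zero_rpow (ne_of_gt (div_pos (by linarith) (by linarith)))
    rw [hq0, zero_smul]
    have hle0 : legendre L (0 : EuclideanSpace ℝ (Fin n)) ≤ (0 : EReal) := by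
      refine iSup_le fun z => ?_
      have : (inner ℝ (0 : EuclideanSpace ℝ (Fin n)) z : ℝ) - L z ≤ 0 := by
        rw [inner_zero_left]; linarith [hnonneg z]
      exact_mod_cast EReal.coe_nonpos.mpr this
    calc legendre L (0 : EuclideanSpace ℝ (Fin n)) ≤ 0 := hle0
      _ = ((0:ℝ) : EReal) * legendre L x := by
          rw [EReal.coe_zero, zero_mul]
  · -- 0 < r ≤ 1
    set q := pplus / (pplus - 1) with hqdef
    have hq1 : 1 < q := by
      rw [hqdef, one_lt_div (by linarith)]; linarith
    refine key pplus r hpp (fun z => ?_) hr x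
    have hc1 : 1 ≤ r ^ (1 - q) :=
      Real.one_le_rpow_of_pos_of_le_one_of_nonpos hr hr1 (by linarith)
    exact hL_hi _ hc1 z
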